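/- Assume the invariant setting with S_A ≠ ∅ and L_A \ S_A ≠ ∅, and write p_A = max S_A and q_A = min(L_A \ S_A). Assume a_A < p_A, q_A < a_B, and q_A is less than every element of L_B \ S_B (case 4 of the case analysis). Then: S'_A = S_A \ {a_A}; S'_B = S_B; q_A is the A-side peek, i.e. q_A = min((L_A \ {a_A}) \ S'_A), and q_A is less than every element of (L_B ∪ {a_B}) \ S'_B; and H_h(L') = (H_h(L_A ∪ L_B) \ {a_A}) ∪ {q_A} = S'_A ∪ {q_A} ∪ S_B. -/

import Mathlib

/-- `smallSet m L` is `H_m(L)`: the set of the `m` smallest elements of the finset `L`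
(the first `m` entries of the increasing enumeration of `L`). -/
def smallSet {α : Type*} [LinearOrder α] (m : ℕ) (L : Finset α) : Finset α :=
  ((L.sort (· ≤ ·)).take m).toFinset

section Helpers
variable {α : Type*} [LinearOrder α]


lemma smallSet_subset (m : ℕ) (L : Finset α) : smallSet m L ⊆ L := by
  intro x hx
  simp only [smallSet, List.mem_toFinset] at hx
  have := List.take_subset m (L.sort (· ≤ ·)) hx
  rwa [Finset.mem_sort] at this

lemma card_smallSet (m : ℕ) (L : Finset α) : (smallSet m L).card = min m L.card := by
  rw [smallSet, List.card_toFinset,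
    List.Nodup.dedup ((List.take_sublist m _).nodup (L.sort_nodup _)),
    List.length_take, Finset.length_sort]

lemma smallSet_lt {m : ℕ} {L : Finset α} {x y : α} (hx : x ∈ smallSet m L) (hy : y ∈ L)
    (hy' : y ∉ smallSet m L) : x < y := by
  simp only [smallSet, List.mem_toFinset] at hx hy'
  have hsort : (L.sort (· ≤ ·)).Pairwise (· < ·) := L.sortedLT_sort.pairwise
  have hy2 : y ∈ (L.sort (· ≤ ·)).drop m := by
    have hmem : y ∈ L.sort (· ≤ ·) := (Finset.mem_sort _).2 hy
    rw [← List.take_append_drop m (L.sort (· ≤ ·)), List.mem_append] at hmem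
    tauto
  have h2 := hsort
  rw [← List.take_append_drop m (L.sort (· ≤ ·))] at h2
  exact (List.pairwise_append.1 h2).2.2 x hx y hy2

lemma smallSet_eq {S L : Finset α} (hSL : S ⊆ L)
    (hsep : ∀ x ∈ S, ∀ y ∈ L, y ∉ S → x < y) : smallSet S.card L = S := by
  have hcard : (smallSet S.card L).card = S.card := by
    rw [card_smallSet]; exact min_eq_left (Finset.card_le_card hSL)
  apply (Finset.eq_of_subset_of_card_le _ hcard.le).symm
  intro x hxS
  by_contra hxT
  by_cases hne : (smallSet S.card L \ S).Nonempty
  · obtain ⟨y, hy⟩ := hne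
    rw [Finset.mem_sdiff] at hy
    exact absurd (hsep x hxS y (smallSet_subset _ _ hy.1) hy.2)
      (smallSet_lt hy.1 (hSL hxS) hxT).asymm
  · rw [Finset.not_nonempty_iff_eq_empty, Finset.sdiff_eq_empty_iff_subset] at hne
    have heq : smallSet S.card L = S := Finset.eq_of_subset_of_card_le hne hcard.ge
    rw [heq] at hxT; exact hxT hxS
end Helpers

/-- case 4 of the case analysis.  Invariant setting: `L_A, L_B` disjoint
with `|L_A| + |L_B| = 2h+1`, `S_A ⊆ L_A`, `S_B ⊆ L_B`, `S_A ∪ S_B = H_h(L_A ∪ L_B)`,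
`a_A ∈ L_A`, `a_B ∉ L_A ∪ L_B`; `L' = (L_A \ {a_A}) ∪ L_B ∪ {a_B}`; updated small sets
`S'_A = H_{|S_A|-1}(L_A \ {a_A})` and `S'_B = H_{|S_B|}(L_B ∪ {a_B})`.
Assume `S_A ≠ ∅`, `L_A \ S_A ≠ ∅`, `a_A < p_A = max S_A`, `q_A = min(L_A \ S_A) < a_B`,
and `q_A` is less than every element of `L_B \ S_B`.  Then `S'_A = S_A \ {a_A}`,
`S'_B = S_B`, `q_A` is the A-side peek (`q_A = min((L_A \ {a_A}) \ S'_A)`) and is less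
than every element of `(L_B ∪ {a_B}) \ S'_B`, and
`H_h(L') = (H_h(L_A ∪ L_B) \ {a_A}) ∪ {q_A} = S'_A ∪ {q_A} ∪ S_B`. -/
theorem invariant_case4 {α : Type*} [LinearOrder α] (h : ℕ)
    (LA LB SA SB : Finset α) (hdisj : Disjoint LA LB)
    (hcard : LA.card + LB.card = 2 * h + 1)
    (hSA : SA ⊆ LA) (hSB : SB ⊆ LB)
    (hinv : SA ∪ SB = smallSet h (LA ∪ LB))
    (aA aB : α) (haA : aA ∈ LA) (haB : aB ∉ LA ∪ LB)
    (hSAne : SA.Nonempty) (hQAne : (LA \ SA).Nonempty)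
    (h1 : aA < SA.max' hSAne)
    (h2 : (LA \ SA).min' hQAne < aB)
    (h3 : ∀ x ∈ LB \ SB, (LA \ SA).min' hQAne < x) :
    smallSet (SA.card - 1) (LA \ {aA}) = SA \ {aA} ∧
    smallSet SB.card (LB ∪ {aB}) = SB ∧
    ((LA \ {aA}) \ smallSet (SA.card - 1) (LA \ {aA})).min =
      ((LA \ SA).min' hQAne : WithTop α) ∧
    (∀ x ∈ (LB ∪ {aB}) \ smallSet SB.card (LB ∪ {aB}), (LA \ SA).min' hQAne < x) ∧
    smallSet h ((LA \ {aA}) ∪ LB ∪ {aB}) =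
      (smallSet h (LA ∪ LB) \ {aA}) ∪ {(LA \ SA).min' hQAne} ∧
    smallSet h ((LA \ {aA}) ∪ LB ∪ {aB}) =
      smallSet (SA.card - 1) (LA \ {aA}) ∪ {(LA \ SA).min' hQAne} ∪ SB := by
  set q := (LA \ SA).min' hQAne with hq
  have hqmem : q ∈ LA \ SA := Finset.min'_mem _ _
  rw [Finset.mem_sdiff] at hqmem
  have hqSB : q ∉ SB := fun hx => (Finset.disjoint_left.1 hdisj hqmem.1) (hSB hx)
  have hqT : q ∉ SA ∪ SB := by
    rw [Finset.mem_union]; push_neg; exact ⟨hqmem.2, hqSB⟩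
  have hcardU : (LA ∪ LB).card = 2 * h + 1 := by
    rw [Finset.card_union_of_disjoint hdisj, hcard]
  have hTcard : (SA ∪ SB).card = h := by
    rw [hinv, card_smallSet, hcardU]; omega
  have key : ∀ x ∈ SA ∪ SB, ∀ y ∈ LA ∪ LB, y ∉ SA ∪ SB → x < y := by
    intro x hx y hy hy'
    rw [hinv] at hx hy'
    exact smallSet_lt hx hy hy'
  have hxq : ∀ x ∈ SA ∪ SB, x < q := fun x hx =>
    key x hx q (Finset.mem_union_left _ hqmem.1) hqT
  have haASA : aA ∈ SA := by
    by_contra hc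
    have haAT : aA ∉ SA ∪ SB := by
      rw [Finset.mem_union]; push_neg
      exact ⟨hc, fun hx => Finset.disjoint_left.1 hdisj haA (hSB hx)⟩
    have := key (SA.max' hSAne) (Finset.mem_union_left _ (SA.max'_mem hSAne)) aA
      (Finset.mem_union_left _ haA) haAT
    exact absurd h1 this.asymm
  have hne_qaA : q ≠ aA := fun e => hqmem.2 (e ▸ haASA)
  have g1 : smallSet (SA.card - 1) (LA \ {aA}) = SA \ {aA} := by
    have hc : (SA \ {aA}).card = SA.card - 1 := by
      rw [Finset.sdiff_singleton_eq_erase, Finset.card_erase_of_mem haASA]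
    rw [← hc]
    apply smallSet_eq (Finset.sdiff_subset_sdiff hSA (le_refl _))
    intro x hx y hy hy'
    rw [Finset.mem_sdiff, Finset.mem_singleton] at hx hy
    have hyS : y ∉ SA := fun hyy => hy' (Finset.mem_sdiff.2 ⟨hyy, by simp [hy.2]⟩)
    refine key x (Finset.mem_union_left _ hx.1) y (Finset.mem_union_left _ hy.1) ?_
    rw [Finset.mem_union]; push_neg
    exact ⟨hyS, fun hs => Finset.disjoint_left.1 hdisj hy.1 (hSB hs)⟩
  have g2 : smallSet SB.card (LB ∪ {aB}) = SB := by
    apply smallSet_eq (hSB.trans Finset.subset_union_left)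
    intro x hx y hy hy'
    have hxT : x ∈ SA ∪ SB := Finset.mem_union_right _ hx
    rw [Finset.mem_union, Finset.mem_singleton] at hy
    rcases hy with hy | rfl
    · refine key x hxT y (Finset.mem_union_right _ hy) ?_
      rw [Finset.mem_union]; push_neg
      exact ⟨fun hs => Finset.disjoint_left.1 hdisj (hSA hs) hy, hy'⟩
    · exact (hxq x hxT).trans h2
  have hset3 : (LA \ {aA}) \ (SA \ {aA}) = LA \ SA := by
    ext x
    simp only [Finset.mem_sdiff, Finset.mem_singleton]
    constructor
    · rintro ⟨⟨ha, hb⟩, hc⟩; exact ⟨ha, fun hs => hc ⟨hs, hb⟩⟩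
    · rintro ⟨ha, hb⟩; exact ⟨⟨ha, fun e => hb (e ▸ haASA)⟩, fun hs => hb hs.1⟩
  have g3 : ((LA \ {aA}) \ smallSet (SA.card - 1) (LA \ {aA})).min = (q : WithTop α) := by
    rw [g1, hset3]
    exact (Finset.coe_min' hQAne).symm
  have g4 : ∀ x ∈ (LB ∪ {aB}) \ smallSet SB.card (LB ∪ {aB}), q < x := by
    rw [g2]
    intro x hx
    rw [Finset.mem_sdiff, Finset.mem_union, Finset.mem_singleton] at hx
    rcases hx.1 with hxl | rfl
    · exact h3 x (Finset.mem_sdiff.2 ⟨hxl, hx.2⟩)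
    · exact h2
  have hh1 : 1 ≤ h := by
    have := Finset.card_pos.2 (hSAne.mono (Finset.subset_union_left (s₂ := SB)))
    omega
  set S' := ((SA ∪ SB) \ {aA}) ∪ {q} with hS'
  have hScard : S'.card = h := by
    rw [hS', Finset.card_union_of_disjoint
        (Finset.disjoint_singleton_right.2 (fun hx => hqT (Finset.mem_sdiff.1 hx).1)),
      Finset.sdiff_singleton_eq_erase,
      Finset.card_erase_of_mem (Finset.mem_union_left _ haASA),
      Finset.card_singleton, hTcard]
    omega
  have hS'sub : S' ⊆ (LA \ {aA}) ∪ LB ∪ {aB} := by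
    intro x hx
    rw [hS', Finset.mem_union, Finset.mem_sdiff, Finset.mem_union, Finset.mem_singleton,
      Finset.mem_singleton] at hx
    rw [Finset.mem_union, Finset.mem_union, Finset.mem_sdiff, Finset.mem_singleton]
    rcases hx with ⟨hx1 | hx1, hx2⟩ | rfl
    · exact Or.inl (Or.inl ⟨hSA hx1, hx2⟩)
    · exact Or.inl (Or.inr (hSB hx1))
    · exact Or.inl (Or.inl ⟨hqmem.1, hne_qaA⟩)
  have hsep' : ∀ x ∈ S', ∀ y ∈ (LA \ {aA}) ∪ LB ∪ {aB}, y ∉ S' → x < y := by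
    intro x hx y hy hy'
    have hynq : y ≠ q := fun e => hy'
      (by rw [hS', e]; exact Finset.mem_union_right _ (Finset.mem_singleton_self q))
    have hqy : q < y := by
      rw [Finset.mem_union, Finset.mem_union, Finset.mem_sdiff, Finset.mem_singleton,
        Finset.mem_singleton] at hy
      rcases hy with (⟨hyLA, hyne⟩ | hyLB) | rfl
      · have hyS : y ∉ SA := fun hs => hy' (by
          rw [hS']
          exact Finset.mem_union_left _ (Finset.mem_sdiff.2
            ⟨Finset.mem_union_left _ hs, by simpa using hyne⟩))
        exact lt_of_le_of_ne (Finset.min'_le _ _ (Finset.mem_sdiff.2 ⟨hyLA, hyS⟩)) hynq.symm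
      · have hyS : y ∉ SB := fun hs => hy' (by
          rw [hS']
          refine Finset.mem_union_left _ (Finset.mem_sdiff.2
            ⟨Finset.mem_union_right _ hs, ?_⟩)
          simp only [Finset.mem_singleton]
          exact fun e => Finset.disjoint_left.1 hdisj (e ▸ hSA haASA) hyLB)
        exact h3 y (Finset.mem_sdiff.2 ⟨hyLB, hyS⟩)
      · exact h2
    rw [hS', Finset.mem_union, Finset.mem_singleton] at hx
    rcases hx with hx | rfl
    · exact (hxq x (Finset.mem_sdiff.1 hx).1).trans hqy
    · exact hqy
  have g5 : smallSet h ((LA \ {aA}) ∪ LB ∪ {aB}) = S' := by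
    rw [← hScard]; exact smallSet_eq hS'sub hsep'
  refine ⟨g1, g2, g3, g4, ?_, ?_⟩
  · rw [g5, hS', ← hinv]
  · rw [g5, hS', g1]
    ext x
    simp only [Finset.mem_union, Finset.mem_sdiff, Finset.mem_singleton]
    have hxaA : x ∈ SB → x ≠ aA :=
      fun hs e => Finset.disjoint_left.1 hdisj (e ▸ hSA haASA) (hSB hs)
    tauto
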